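/- Fix a real number m > 1 and a natural number n ≥ 3, and let s = √((m−1)(m+n−2)(n−2)). Let A be the 3×3 real matrix A = [[ (2(m+n−2)−m(n−2))/(m(n−1)), 2s/(m(n−1)), 0 ], [ (m−2)s/(m(m−1)(n−1)), (2(m+n−2)−2m(n−1))/(m(m−1)(n−1)), 0 ], [ 0, 0, 1/(n−1) ]]. Then the characteristic polynomial of A factors as det(t·Id − A) = (t − 1/(n−1))·(t − 2/(n−1))·(t + (n−2)/(n−1)); in particular the eigenvalues of A are 1/(n−1), 2/(n−1) and −(n−2)/(n−1). (A is the linearization of the Böhm system at the critical point I, and this eigenvalue computation — showing I is a saddle with a one-dimensional stable direction — is the key step in the uniqueness part of the proof of Theorem 5.7 of the paper.) -/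

import Mathlib

open Matrix

noncomputable section

set_option maxHeartbeats 1000000 in
/-- The eigenvalue computation for the linearization of the Böhm system at the
critical point `I`, the key step in the uniqueness part of the proof of
Theorem 5.7 of the paper: with `s = √((m−1)(m+n−2)(n−2))`, the characteristic
polynomial of the linearization matrix `A` factors as
`det(t·Id − A) = (t − 1/(n−1))(t − 2/(n−1))(t + (n−2)/(n−1))`. -/
theorem boehm_linearization_eigenvalues (m : ℝ) (hm : 1 < m) (n : ℕ) (hn : 3 ≤ n)
    (s : ℝ) (hs : s = Real.sqrt ((m - 1) * (m + n - 2) * (n - 2)))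
    (A : Matrix (Fin 3) (Fin 3) ℝ)
    (hA : A = !![(2 * (m + n - 2) - m * (n - 2)) / (m * (n - 1)),
                   2 * s / (m * (n - 1)), 0;
                 (m - 2) * s / (m * (m - 1) * (n - 1)),
                   (2 * (m + n - 2) - 2 * m * (n - 1)) / (m * (m - 1) * (n - 1)), 0;
                 0, 0, 1 / ((n : ℝ) - 1)]) :
    ∀ t : ℝ, (t • (1 : Matrix (Fin 3) (Fin 3) ℝ) - A).det =
      (t - 1 / (n - 1)) * (t - 2 / (n - 1)) * (t + (n - 2) / (n - 1)) := by
  intro t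
  have hn3 : (3:ℝ) ≤ (n:ℝ) := by exact_mod_cast hn
  have hn1 : (n:ℝ) - 1 ≠ 0 := by nlinarith
  have hm0 : m ≠ 0 := by nlinarith
  have hm1 : m - 1 ≠ 0 := by nlinarith
  have hs2 : s ^ 2 = (m - 1) * (m + n - 2) * (n - 2) := by
    rw [hs, Real.sq_sqrt]
    have h1 : (0:ℝ) ≤ m - 1 := by linarith
    have h2 : (0:ℝ) ≤ m + n - 2 := by linarith
    have h3 : (0:ℝ) ≤ (n:ℝ) - 2 := by linarith
    positivity
  have hB : t • (1 : Matrix (Fin 3) (Fin 3) ℝ) - A =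
      !![t - (2 * (m + n - 2) - m * (n - 2)) / (m * (n - 1)),
           -(2 * s / (m * (n - 1))), 0;
         -((m - 2) * s / (m * (m - 1) * (n - 1))),
           t - (2 * (m + n - 2) - 2 * m * (n - 1)) / (m * (m - 1) * (n - 1)), 0;
         0, 0, t - 1 / ((n : ℝ) - 1)] := by
    subst hA
    ext i j
    fin_cases i <;> fin_cases j <;>
      simp [Matrix.one_apply] <;> ring
  rw [hB, Matrix.det_fin_three]
  simp only [Matrix.of_apply, Matrix.cons_val', Matrix.cons_val_zero, Matrix.cons_val_one,
    Matrix.cons_val_two, Matrix.empty_val', Matrix.cons_val_fin_one, Matrix.head_cons,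
    Matrix.tail_cons]
  norm_num
  field_simp
  ring_nf
  rw [hs2]; ring

end
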